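/- Let (V, H) be normed spaces with V continuously embedded in H, and let {u_Δt} be a family of piecewise-constant-in-time functions u_Δt(t) = u_Δt^n for t ∈ ((n-1)Δt, nΔt], n = 1,…,N, NΔt = T, with values in H. Suppose the numerical dissipation estimate holds: ∑_{n=1}^{N-1} ‖u_Δt^{n+1} - u_Δt^n‖_H² ≤ C. Then for every s with 0 ≤ s < Δt, ‖τ_s τ_{lΔt} u_Δt - τ_{lΔt} u_Δt‖²_{L²(lΔt + s, T; H)} ≤ C s, where τ_h u(t) = u(t-h). -/

import Mathlib

open MeasureTheory Set

/-- Numerical dissipation controls fractional time shifts: for a piecewise constant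
(in time) function `u` with values `u^n` on `((n-1)Δt, nΔt]`, if
`∑_{n=1}^{N-1} ‖u^{n+1} - u^n‖² ≤ C` then for `0 ≤ s < Δt`,
`‖τ_s τ_{lΔt} u - τ_{lΔt} u‖²_{L²(lΔt+s, T; H)} ≤ C s`. -/
theorem dissipation_time_shift_estimate
    {H : Type*} [NormedAddCommGroup H]
    (N l : ℕ) (Δt T s C : ℝ) (un : ℕ → H) (u : ℝ → H)
    (hΔt : 0 < Δt) (hT : (N : ℝ) * Δt = T)
    (hpc : ∀ n : ℕ, 1 ≤ n → n ≤ N →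
      ∀ t ∈ Set.Ioc (((n : ℝ) - 1) * Δt) ((n : ℝ) * Δt), u t = un n)
    (hdiss : ∑ n ∈ Finset.Ico 1 N, ‖un (n + 1) - un n‖ ^ 2 ≤ C)
    (hs0 : 0 ≤ s) (hsΔ : s < Δt) (hl : (l : ℝ) * Δt + s ≤ T) :
    ∫ t in Set.Ioc ((l : ℝ) * Δt + s) T,
        ‖u (t - s - (l : ℝ) * Δt) - u (t - (l : ℝ) * Δt)‖ ^ 2
      ≤ C * s := by
  set L : ℝ := (l : ℝ) * Δt with hLdef
  have hL0 : 0 ≤ L := by positivity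
  -- uniqueness of the jump interval containing a point
  have huniq : ∀ (n k : ℕ) (r : ℝ), r ∈ Ioc ((n:ℝ)*Δt) ((n:ℝ)*Δt + s) →
      r ∈ Ioc ((k:ℝ)*Δt) ((k:ℝ)*Δt + s) → n = k := by
    intro n k r hn hk
    have h1 : (n:ℝ)*Δt < ((k:ℝ)+1)*Δt := by
      have := hn.1; have := hk.2; nlinarith
    have h2 : (k:ℝ)*Δt < ((n:ℝ)+1)*Δt := by
      have := hk.1; have := hn.2; nlinarith
    have h1' : (n:ℝ) < (k:ℝ)+1 := lt_of_mul_lt_mul_right h1 hΔt.le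
    have h2' : (k:ℝ) < (n:ℝ)+1 := lt_of_mul_lt_mul_right h2 hΔt.le
    have : n < k + 1 := by exact_mod_cast h1'
    have : k < n + 1 := by exact_mod_cast h2'
    omega
  -- the piecewise description of the shifted difference
  have key : EqOn (fun t => ‖u (t - s - L) - u (t - L)‖ ^ 2)
      (fun t => ∑ n ∈ Finset.Ico 1 N,
        (Ioc (L + (n:ℝ)*Δt) (L + (n:ℝ)*Δt + s)).indicator
          (fun _ => ‖un (n + 1) - un n‖ ^ 2) t)
      (Ioc (L + s) T) := by
    intro t ht
    have htl : L + s < t := ht.1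
    have htr : t ≤ T := ht.2
    have hrs : s < t - L := by linarith
    have hrN : t - L ≤ (N:ℝ)*Δt := by
      have : 0 ≤ L := hL0; linarith [hT]
    simp only
    by_cases hc : ∃ n ∈ Finset.Ico 1 N, t - L ∈ Ioc ((n:ℝ)*Δt) ((n:ℝ)*Δt + s)
    · obtain ⟨n, hnmem, hrn⟩ := hc
      obtain ⟨hn1, hnN⟩ := Finset.mem_Ico.mp hnmem
      have hn1' : (1:ℝ) ≤ (n:ℝ) := by exact_mod_cast hn1
      have hu1 : u (t - L) = un (n + 1) := by
        apply hpc (n+1) (by omega) (by omega)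
        constructor
        · push_cast; linarith [hrn.1]
        · push_cast; linarith [hrn.2]
      have hu2 : u (t - s - L) = un n := by
        apply hpc n hn1 (by omega)
        constructor
        · linarith [hrn.1]
        · linarith [hrn.2]
      rw [hu1, hu2]
      rw [Finset.sum_eq_single_of_mem n hnmem]
      · have hmem : t ∈ Ioc (L + (n:ℝ)*Δt) (L + (n:ℝ)*Δt + s) :=
          ⟨by linarith [hrn.1], by linarith [hrn.2]⟩
        rw [Set.indicator_of_mem hmem, norm_sub_rev]
      · intro k hkmem hkn
        apply Set.indicator_of_notMem
        intro hmem
        exact hkn (huniq k n (t - L) ⟨by linarith [hmem.1], by linarith [hmem.2]⟩ hrn)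
    · push_neg at hc
      -- find the interval containing t - L
      set m : ℕ := ⌈(t - L)/Δt⌉₊ with hmdef
      have hr0 : 0 < t - L := by linarith
      have hm1 : 1 ≤ m := by
        rw [hmdef]
        exact Nat.one_le_ceil_iff.mpr (div_pos hr0 hΔt)
      have hmN : m ≤ N := by
        rw [hmdef]
        exact Nat.ceil_le.mpr (by rw [div_le_iff₀ hΔt]; linarith)
      have hub : t - L ≤ (m:ℝ)*Δt := by
        have := Nat.le_ceil ((t - L)/Δt)
        rw [div_le_iff₀ hΔt] at this
        exact this
      have hlb : ((m:ℝ) - 1)*Δt < t - L := by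
        have h : (m - 1 : ℕ) < m := by omega
        rw [hmdef] at h
        have := Nat.lt_ceil.mp h
        rw [lt_div_iff₀ hΔt] at this
        have hc : ((m - 1 : ℕ) : ℝ) = (m:ℝ) - 1 := by
          have : 1 ≤ m := hm1
          push_cast [this]; ring
        rw [hc] at this
        exact this
      have hgt : ((m:ℝ) - 1)*Δt + s < t - L := by
        by_contra hno
        push_neg at hno
        have hm2 : 2 ≤ m := by
          by_contra h2
          push_neg at h2
          have hm1' : m = 1 := by omega
          rw [hm1'] at hno
          push_cast at hno
          linarith
        have hkmem : (m - 1 : ℕ) ∈ Finset.Ico 1 N := by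
          rw [Finset.mem_Ico]; omega
        have hc1 : ((m - 1 : ℕ) : ℝ) = (m:ℝ) - 1 := by
          push_cast [hm1]; ring
        exact absurd ⟨by rw [hc1]; linarith, by rw [hc1]; linarith⟩
          (hc (m - 1) hkmem)
      have hu1 : u (t - L) = un m := hpc m hm1 hmN _ ⟨hlb, hub⟩
      have hu2 : u (t - s - L) = un m := by
        apply hpc m hm1 hmN
        constructor
        · linarith
        · linarith
      rw [hu1, hu2, sub_self, norm_zero]
      have h0 : (0:ℝ) ^ 2 = 0 := by norm_num
      rw [h0, eq_comm]
      apply Finset.sum_eq_zero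
      intro k hkmem
      apply Set.indicator_of_notMem
      intro hmem
      exact (hc k hkmem ⟨by linarith [hmem.1], by linarith [hmem.2]⟩)
  rw [setIntegral_congr_fun measurableSet_Ioc key]
  have hFint : ∀ n ∈ Finset.Ico 1 N, IntegrableOn
      (fun t => (Ioc (L + (n:ℝ)*Δt) (L + (n:ℝ)*Δt + s)).indicator
        (fun _ => ‖un (n + 1) - un n‖ ^ 2) t) (Ioc (L + s) T) := by
    intro n _
    apply Integrable.integrableOn
    rw [integrable_indicator_iff measurableSet_Ioc]
    exact integrableOn_const measure_Ioc_lt_top.ne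
  rw [integral_finset_sum _ hFint]
  have hbound : ∀ n ∈ Finset.Ico 1 N,
      (∫ t in Ioc (L + s) T, (Ioc (L + (n:ℝ)*Δt) (L + (n:ℝ)*Δt + s)).indicator
        (fun _ => ‖un (n + 1) - un n‖ ^ 2) t) ≤ ‖un (n + 1) - un n‖ ^ 2 * s := by
    intro n _
    rw [setIntegral_indicator measurableSet_Ioc, setIntegral_const, smul_eq_mul]
    have hv : (volume (Ioc (L + s) T ∩ Ioc (L + (n:ℝ)*Δt) (L + (n:ℝ)*Δt + s))).toReal
        ≤ s := by
      have h2 : volume (Ioc (L + s) T ∩ Ioc (L + (n:ℝ)*Δt) (L + (n:ℝ)*Δt + s))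
          ≤ ENNReal.ofReal s := by
        refine le_trans (measure_mono inter_subset_right) ?_
        rw [Real.volume_Ioc]
        apply le_of_eq
        congr 1
        ring
      calc _ ≤ (ENNReal.ofReal s).toReal :=
            ENNReal.toReal_mono ENNReal.ofReal_ne_top h2
        _ = s := ENNReal.toReal_ofReal hs0
    have hsq : (0:ℝ) ≤ ‖un (n + 1) - un n‖ ^ 2 := sq_nonneg _
    calc _ ≤ s * ‖un (n+1) - un n‖^2 := mul_le_mul_of_nonneg_right hv hsq
      _ = _ := mul_comm _ _
  refine le_trans (Finset.sum_le_sum hbound) ?_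
  rw [← Finset.sum_mul]
  exact mul_le_mul_of_nonneg_right hdiss hs0
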